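/- Let D ≥ 1, let U′ ⊆ ℝ^D be open, and let m ≥ 1. Let h′ : ℝ^{D−1} → ℝ and κ′ : ℝ → ℝ be semianalytic functions of class C^m such that κ′(0) = 1 and the function (x¹,…,x^D) ↦ h′(x¹,…,x^{D−1})·κ′(x^D) has compact support contained in U′. Define φ′_λ : ℝ^D → ℝ^D by φ′_λ(x¹,…,x^D) = (x¹ + λ·h′(x¹,…,x^{D−1})·κ′(x^D), x², …, x^D). Then there exists λ₀ > 0 such that for every 0 < λ < λ₀, φ′_λ is a C^m diffeomorphism of ℝ^D which is semianalytic together with its inverse, is equal to the identity outside U′, and maps U′ onto U′. -/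

import Mathlib

/-- A sign, one of `>`, `=`, `<`, used in the definition of semianalytic partitions. -/
inductive Sign : Type
  | pos : Sign
  | zero : Sign
  | neg : Sign

/-- `s.holds r` means that the real number `r` satisfies the (in)equality prescribed by the
sign `s`, i.e. `r > 0`, `r = 0` or `r < 0`. -/
def Sign.holds : Sign → ℝ → Prop
  | .pos, r => 0 < r
  | .zero, r => r = 0
  | .neg, r => r < 0

/-- The cell `U_{h,σ}` of the (semi)analytic partition `P(U,h)` determined by the sign
assignment `σ`: the set of `x ∈ U` such that `h I x` satisfies the sign condition `σ I`
for every `I`. -/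
def saCell {E : Type*} (U : Set E) {N : ℕ} (h : Fin N → E → ℝ) (σ : Fin N → Sign) : Set E :=
  {x ∈ U | ∀ I, (σ I).holds (h I x)}

/-- A function `f` defined on an open set `U` is semianalytic if every `x ∈ U` has an open
neighborhood `V ⊆ U` together with a finite family `h` of functions analytic on `V`
(a semianalytic partition `P(V,h)`) such that on every cell of the partition, `f` coincides
with a function analytic on `V`. -/
def SemianalyticOn {E F : Type*} [NormedAddCommGroup E] [NormedSpace ℝ E]
    [NormedAddCommGroup F] [NormedSpace ℝ F] (f : E → F) (U : Set E) : Prop :=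
  ∀ x ∈ U, ∃ V : Set E, IsOpen V ∧ x ∈ V ∧ V ⊆ U ∧
    ∃ (N : ℕ) (h : Fin N → E → ℝ), (∀ I, AnalyticOnNhd ℝ (h I) V) ∧
      ∀ σ : Fin N → Sign, ∃ g : E → F, AnalyticOnNhd ℝ g V ∧
        Set.EqOn f g (saCell V h σ)

/-- The map `φ'_λ(x¹,…,x^D) = (x¹ + λ·h'(x¹,…,x^{D−1})·κ'(x^D), x², …, x^D)` of Lemma 4.2,
on `ℝ^D` with `D = d + 1`. -/
noncomputable def phiLam (d : ℕ) (h' : (Fin d → ℝ) → ℝ) (κ' : ℝ → ℝ) (lam : ℝ)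
    (x : Fin (d + 1) → ℝ) : Fin (d + 1) → ℝ :=
  Function.update x 0 (x 0 + lam * (h' (x ∘ Fin.castSucc) * κ' (x (Fin.last d))))

open Set Function Filter Metric

namespace uniqLQG

/-! ### Sign instances and helpers -/

instance : DecidableEq Sign := fun a b => by
  cases a <;> cases b <;> first
    | exact isTrue rfl
    | exact isFalse (by intro h; exact absurd h (by simp))

instance : Fintype Sign where
  elems := {Sign.pos, Sign.zero, Sign.neg}
  complete := by intro a; cases a <;> simp

noncomputable def sgn (r : ℝ) : Sign :=
  if 0 < r then .pos else if r = 0 then .zero else .neg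

lemma sgn_holds (r : ℝ) : (sgn r).holds r := by
  unfold sgn
  split_ifs with h1 h2
  · exact h1
  · exact h2
  · exact lt_of_le_of_ne (not_lt.1 h1) h2

lemma holds_eq_sgn {s : Sign} {r : ℝ} (h : s.holds r) : s = sgn r := by
  cases s <;> unfold sgn <;> simp only [Sign.holds] at h
  · rw [if_pos h]
  · rw [if_neg (by simp [h]), if_pos h]
  · rw [if_neg (by linarith), if_neg (by linarith)]

/-- two signs holding the same real coincide -/
lemma holds_unique {s t : Sign} {r : ℝ} (hs : s.holds r) (ht : t.holds r) : s = t := by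
  rw [holds_eq_sgn hs, holds_eq_sgn ht]

/-! ### repackaging lemma -/

lemma semianalyticOn_of_data {E F' : Type*} [NormedAddCommGroup E] [NormedSpace ℝ E]
    [NormedAddCommGroup F'] [NormedSpace ℝ F'] {f : E → F'} {U : Set E}
    (H : ∀ x ∈ U, ∃ V : Set E, IsOpen V ∧ x ∈ V ∧ V ⊆ U ∧
      ∃ (ι : Type) (_ : Fintype ι) (h : ι → E → ℝ), (∀ I, AnalyticOnNhd ℝ (h I) V) ∧
        ∀ σ : ι → Sign, ∃ g : E → F', AnalyticOnNhd ℝ g V ∧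
          Set.EqOn f g {x ∈ V | ∀ I, (σ I).holds (h I x)}) :
    SemianalyticOn f U := by
  intro x hx
  obtain ⟨V, hVo, hVx, hVU, ι, hFin, h, hA, key⟩ := H x hx
  refine ⟨V, hVo, hVx, hVU, Fintype.card ι, fun i => h ((Fintype.equivFin ι).symm i), ?_, ?_⟩
  · intro I; exact hA _
  · intro σ
    obtain ⟨g, hgA, hgE⟩ := key (fun J => σ ((Fintype.equivFin ι) J))
    refine ⟨g, hgA, fun y hy => hgE ?_⟩
    obtain ⟨hyV, hsig⟩ := hy
    refine ⟨hyV, fun J => ?_⟩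
    have := hsig ((Fintype.equivFin ι) J)
    simpa using this


variable {d : ℕ}

/-- the continuous linear map `t ↦ (t,0,…,0)` -/
noncomputable def sCLM (d : ℕ) : ℝ →L[ℝ] (Fin (d+1) → ℝ) :=
  ContinuousLinearMap.pi (fun i => if i = 0 then ContinuousLinearMap.id ℝ ℝ else 0)

lemma sCLM_apply (s : ℝ) (i : Fin (d+1)) : sCLM d s i = if i = 0 then s else 0 := by
  simp only [sCLM, ContinuousLinearMap.pi_apply]
  by_cases h : i = 0 <;> simp [h]

lemma norm_sCLM_le (s : ℝ) : ‖sCLM d s‖ ≤ |s| := by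
  rw [show ‖sCLM d s‖ = ‖(sCLM d s : Fin (d+1) → ℝ)‖ from rfl]
  refine (pi_norm_le_iff_of_nonneg (abs_nonneg s)).2 (fun i => ?_)
  rw [sCLM_apply]
  by_cases h : i = 0 <;> simp [h]

/-- the shear map `x ↦ x + λ F(x)·e₀` -/
noncomputable def shear (d : ℕ) (lam : ℝ) (F : (Fin (d+1) → ℝ) → ℝ) :
    (Fin (d+1) → ℝ) → (Fin (d+1) → ℝ) :=
  fun x => x + sCLM d (lam * F x)

lemma phiLam_eq_shear (d : ℕ) (h' : (Fin d → ℝ) → ℝ) (κ' : ℝ → ℝ) (lam : ℝ) :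
    phiLam d h' κ' lam =
      shear d lam (fun x => h' (x ∘ Fin.castSucc) * κ' (x (Fin.last d))) := by
  funext x
  funext i
  simp only [phiLam, shear, Pi.add_apply, Function.update_apply, sCLM_apply]
  by_cases h : i = 0
  · subst h; simp
  · simp [h]

/-- derivative of the shear map as a continuous linear map -/
noncomputable def shearD (d : ℕ) (lam : ℝ) (c : (Fin (d+1) → ℝ) →L[ℝ] ℝ) :
    (Fin (d+1) → ℝ) →L[ℝ] (Fin (d+1) → ℝ) :=
  ContinuousLinearMap.id ℝ _ + (sCLM d).comp (lam • c)

lemma shearD_apply (lam : ℝ) (c : (Fin (d+1) → ℝ) →L[ℝ] ℝ) (v : Fin (d+1) → ℝ) :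
    shearD d lam c v = v + sCLM d (lam * c v) := by
  simp only [shearD, ContinuousLinearMap.add_apply, ContinuousLinearMap.id_apply,
    ContinuousLinearMap.comp_apply, ContinuousLinearMap.smul_apply, smul_eq_mul]

/-- inverse of the derivative -/
noncomputable def shearDInv (d : ℕ) (lam : ℝ) (c : (Fin (d+1) → ℝ) →L[ℝ] ℝ) :
    (Fin (d+1) → ℝ) →L[ℝ] (Fin (d+1) → ℝ) :=
  ContinuousLinearMap.id ℝ _ - (sCLM d).comp (((1 + lam * c (sCLM d 1))⁻¹ * lam) • c)

lemma c_sCLM (c : (Fin (d+1) → ℝ) →L[ℝ] ℝ) (s : ℝ) : c (sCLM d s) = s * c (sCLM d 1) := by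
  have : sCLM d s = s • sCLM d 1 := by rw [← map_smul]; norm_num
  rw [this, map_smul, smul_eq_mul]

lemma shear_left_inv {lam : ℝ} {c : (Fin (d+1) → ℝ) →L[ℝ] ℝ}
    (h : 1 + lam * c (sCLM d 1) ≠ 0) (v : Fin (d+1) → ℝ) :
    shearDInv d lam c (shearD d lam c v) = v := by
  set e := c (sCLM d 1) with he
  have h1 : c (shearD d lam c v) = c v + (lam * c v) * e := by
    rw [shearD_apply, map_add, c_sCLM]
  simp only [shearDInv, ContinuousLinearMap.sub_apply, ContinuousLinearMap.id_apply,
    ContinuousLinearMap.comp_apply, ContinuousLinearMap.smul_apply, smul_eq_mul, h1]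
  rw [shearD_apply]
  have hβ : (1 + lam * e)⁻¹ * (1 + lam * e) = 1 := inv_mul_cancel₀ h
  have harg : (1 + lam * e)⁻¹ * lam * (c v + lam * c v * e) = lam * c v := by
    linear_combination (lam * c v) * hβ
  rw [harg]
  abel

lemma shear_right_inv {lam : ℝ} {c : (Fin (d+1) → ℝ) →L[ℝ] ℝ}
    (h : 1 + lam * c (sCLM d 1) ≠ 0) (w : Fin (d+1) → ℝ) :
    shearD d lam c (shearDInv d lam c w) = w := by
  set e := c (sCLM d 1) with he
  have h1 : c (shearDInv d lam c w) = c w - ((1 + lam * e)⁻¹ * lam * c w) * e := by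
    simp only [shearDInv, ContinuousLinearMap.sub_apply, ContinuousLinearMap.id_apply,
      ContinuousLinearMap.comp_apply, ContinuousLinearMap.smul_apply, smul_eq_mul]
    rw [map_sub, c_sCLM]
  rw [shearD_apply, h1]
  simp only [shearDInv, ContinuousLinearMap.sub_apply, ContinuousLinearMap.id_apply,
    ContinuousLinearMap.comp_apply, ContinuousLinearMap.smul_apply, smul_eq_mul]
  have harg : lam * (c w - (1 + lam * e)⁻¹ * lam * c w * e)
      = (1 + lam * e)⁻¹ * lam * c w := by
    have hβ : (1 + lam * e)⁻¹ * (1 + lam * e) = 1 := inv_mul_cancel₀ h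
    linear_combination (- lam * c w) * hβ
  rw [harg]
  abel

/-- derivative of shear as continuous linear equiv -/
noncomputable def shearCLE (d : ℕ) (lam : ℝ) (c : (Fin (d+1) → ℝ) →L[ℝ] ℝ)
    (h : 1 + lam * c (sCLM d 1) ≠ 0) : (Fin (d+1) → ℝ) ≃L[ℝ] (Fin (d+1) → ℝ) :=
  ContinuousLinearEquiv.equivOfInverse (shearD d lam c) (shearDInv d lam c)
    (shear_left_inv h) (shear_right_inv h)

lemma coe_shearCLE (lam : ℝ) (c : (Fin (d+1) → ℝ) →L[ℝ] ℝ)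
    (h : 1 + lam * c (sCLM d 1) ≠ 0) :
    (shearCLE d lam c h : (Fin (d+1) → ℝ) →L[ℝ] (Fin (d+1) → ℝ)) = shearD d lam c := rfl

lemma one_add_ne {lam M : ℝ} (c : (Fin (d+1) → ℝ) →L[ℝ] ℝ)
    (hc : ‖c‖ ≤ M) (hlam : 0 ≤ lam) (hsmall : lam * M < 1/2) :
    1 + lam * c (sCLM d 1) ≠ 0 := by
  have h1 : |c (sCLM d 1)| ≤ M := by
    calc |c (sCLM d 1)| ≤ ‖c‖ * ‖sCLM d 1‖ := c.le_opNorm _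
    _ ≤ M * 1 := by
        apply mul_le_mul hc ((norm_sCLM_le 1).trans (by norm_num)) (norm_nonneg _)
          ((norm_nonneg c).trans hc)
    _ = M := mul_one M
  have h2 : |lam * c (sCLM d 1)| < 1/2 := by
    rw [abs_mul, abs_of_nonneg hlam]
    rcases eq_or_lt_of_le hlam with h | h
    · simp [← h]
    · calc lam * |c (sCLM d 1)| ≤ lam * M := by nlinarith
      _ < 1/2 := hsmall
  intro hzero
  have : lam * c (sCLM d 1) = -1 := by linarith [eq_neg_of_add_eq_zero_right hzero]
  rw [this] at h2
  norm_num at h2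

lemma shear_hasFDerivAt {F : (Fin (d+1) → ℝ) → ℝ} {c : (Fin (d+1) → ℝ) →L[ℝ] ℝ}
    {x : Fin (d+1) → ℝ} (lam : ℝ) (hF : HasFDerivAt F c x) :
    HasFDerivAt (shear d lam F) (shearD d lam c) x := by
  have h1 : HasFDerivAt (fun y => lam * F y) (lam • c) x := hF.const_mul lam
  have h2 : HasFDerivAt (fun y => sCLM d (lam * F y)) ((sCLM d).comp (lam • c)) x :=
    ((sCLM d).hasFDerivAt).comp x h1
  exact (hasFDerivAt_id x).add h2

lemma shear_contDiff {F : (Fin (d+1) → ℝ) → ℝ} {n : WithTop ℕ∞} (lam : ℝ)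
    (hF : ContDiff ℝ n F) : ContDiff ℝ n (shear d lam F) :=
  contDiff_id.add ((sCLM d).contDiff.comp (contDiff_const.mul hF))

lemma shear_analyticOnNhd {F : (Fin (d+1) → ℝ) → ℝ} {V : Set (Fin (d+1) → ℝ)} (lam : ℝ)
    (hF : AnalyticOnNhd ℝ F V) : AnalyticOnNhd ℝ (shear d lam F) V := by
  intro x hx
  have h1 : AnalyticAt ℝ (fun y => lam * F y) x := analyticAt_const.mul (hF x hx)
  have h2 : AnalyticAt ℝ (fun y => sCLM d (lam * F y)) x := ((sCLM d).analyticAt _).comp h1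
  exact analyticAt_id.add h2

lemma shear_continuous {F : (Fin (d+1) → ℝ) → ℝ} (lam : ℝ) (hF : Continuous F) :
    Continuous (shear d lam F) :=
  continuous_id.add ((sCLM d).continuous.comp (continuous_const.mul hF))


variable {d : ℕ}

/-! ### bijectivity of the shear map via contraction -/

section bij
variable {F : (Fin (d+1) → ℝ) → ℝ} {lam L : ℝ}

/-- the auxiliary contraction whose fixed point is the preimage of `y` -/
noncomputable def Tmap (d : ℕ) (lam : ℝ) (F : (Fin (d+1) → ℝ) → ℝ) (y x : Fin (d+1) → ℝ) :
    Fin (d+1) → ℝ :=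
  y - sCLM d (lam * F x)

lemma dist_Tmap (hL : 0 ≤ L) (hlam : 0 ≤ lam)
    (hLip : ∀ x y, dist (F x) (F y) ≤ L * dist x y) (y x x' : Fin (d+1) → ℝ) :
    dist (Tmap d lam F y x) (Tmap d lam F y x') ≤ (lam * L) * dist x x' := by
  have h1 : Tmap d lam F y x - Tmap d lam F y x' = sCLM d (lam * F x' - lam * F x) := by
    simp only [Tmap, map_sub]
    abel
  rw [dist_eq_norm, h1]
  calc ‖sCLM d (lam * F x' - lam * F x)‖ ≤ |lam * F x' - lam * F x| := norm_sCLM_le _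
  _ = lam * |F x' - F x| := by rw [← mul_sub, abs_mul, abs_of_nonneg hlam]
  _ ≤ lam * (L * dist x x') := by
      have := hLip x' x
      rw [Real.dist_eq, dist_comm x' x] at this
      nlinarith [abs_nonneg (F x' - F x)]
  _ = (lam * L) * dist x x' := by ring

lemma Tmap_contracting (hL : 0 ≤ L) (hlam : 0 ≤ lam) (hsmall : lam * L < 1)
    (hLip : ∀ x y, dist (F x) (F y) ≤ L * dist x y) (y : Fin (d+1) → ℝ) :
    ContractingWith (Real.toNNReal (lam * L)) (Tmap d lam F y) := by
  constructor
  · rwa [← NNReal.coe_lt_one, Real.coe_toNNReal _ (by positivity)]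
  · apply LipschitzWith.of_dist_le_mul
    intro x x'
    rw [Real.coe_toNNReal _ (by positivity)]
    exact dist_Tmap hL hlam hLip y x x'

lemma isFixedPt_iff (y x : Fin (d+1) → ℝ) :
    Function.IsFixedPt (Tmap d lam F y) x ↔ shear d lam F x = y := by
  unfold Function.IsFixedPt Tmap
  show y - sCLM d (lam * F x) = x ↔ x + sCLM d (lam * F x) = y
  rw [sub_eq_iff_eq_add]
  exact eq_comm

lemma shear_bijective (hL : 0 ≤ L) (hlam : 0 ≤ lam) (hsmall : lam * L < 1)
    (hLip : ∀ x y, dist (F x) (F y) ≤ L * dist x y) :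
    Function.Bijective (shear d lam F) := by
  constructor
  · intro x x' hxx
    have hc := Tmap_contracting hL hlam hsmall hLip (shear d lam F x)
    have h1 : Function.IsFixedPt (Tmap d lam F (shear d lam F x)) x := (isFixedPt_iff _ _).2 rfl
    have h2 : Function.IsFixedPt (Tmap d lam F (shear d lam F x)) x' :=
      (isFixedPt_iff _ _).2 hxx.symm
    rw [hc.fixedPoint_unique h1, hc.fixedPoint_unique h2]
  · intro y
    have hc := Tmap_contracting hL hlam hsmall hLip y
    exact ⟨_, (isFixedPt_iff y _).1 (hc.fixedPoint_isFixedPt)⟩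

lemma shearInvFun_rightInv (hbij : Function.Bijective (shear d lam F)) (y : Fin (d+1) → ℝ) :
    shear d lam F (Function.invFun (shear d lam F) y) = y :=
  Function.rightInverse_invFun hbij.2 y

lemma shearInvFun_leftInv (hbij : Function.Bijective (shear d lam F)) (x : Fin (d+1) → ℝ) :
    Function.invFun (shear d lam F) (shear d lam F x) = x :=
  Function.leftInverse_invFun hbij.1 x

lemma shearInvFun_dist (hL : 0 ≤ L) (hlam : 0 ≤ lam) (hsmall : lam * L ≤ 1/2)
    (hLip : ∀ x y, dist (F x) (F y) ≤ L * dist x y)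
    (hbij : Function.Bijective (shear d lam F)) (y y' : Fin (d+1) → ℝ) :
    dist (Function.invFun (shear d lam F) y) (Function.invFun (shear d lam F) y')
      ≤ 2 * dist y y' := by
  set ψ := Function.invFun (shear d lam F)
  set x := ψ y
  set x' := ψ y'
  have hx : x = Tmap d lam F y x := ((isFixedPt_iff y x).2 (shearInvFun_rightInv hbij y)).symm
  have hx' : x' = Tmap d lam F y' x' :=
    ((isFixedPt_iff y' x').2 (shearInvFun_rightInv hbij y')).symm
  have key : dist x x' ≤ (lam * L) * dist x x' + dist y y' := by
    calc dist x x' = dist (Tmap d lam F y x) (Tmap d lam F y' x') := by rw [← hx, ← hx']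
    _ ≤ dist (Tmap d lam F y x) (Tmap d lam F y x') +
        dist (Tmap d lam F y x') (Tmap d lam F y' x') := dist_triangle _ _ _
    _ ≤ (lam * L) * dist x x' + dist y y' := by
        gcongr
        · exact dist_Tmap hL hlam hLip y x x'
        · have : Tmap d lam F y x' - Tmap d lam F y' x' = y - y' := by
            simp only [Tmap]; abel
          rw [dist_eq_norm, this, ← dist_eq_norm]
  nlinarith [dist_nonneg (x := x) (y := x'), dist_nonneg (x := y) (y := y'),
    mul_le_of_le_one_left (dist_nonneg (x := x) (y := x')) (le_trans hsmall (by norm_num))]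

lemma shearInvFun_continuous (hL : 0 ≤ L) (hlam : 0 ≤ lam) (hsmall : lam * L ≤ 1/2)
    (hLip : ∀ x y, dist (F x) (F y) ≤ L * dist x y)
    (hbij : Function.Bijective (shear d lam F)) :
    Continuous (Function.invFun (shear d lam F)) := by
  apply LipschitzWith.continuous (K := 2)
  apply LipschitzWith.of_dist_le_mul
  intro y y'
  simpa using shearInvFun_dist hL hlam hsmall hLip hbij y y'

/-- outside the support the shear map is the identity -/
lemma shear_eq_id_of_not_mem {x : Fin (d+1) → ℝ} (hx : x ∉ tsupport F) :
    shear d lam F x = x := by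
  have : F x = 0 := image_eq_zero_of_notMem_tsupport hx
  simp [shear, this]

lemma shearInvFun_eq_id_of_not_mem (hbij : Function.Bijective (shear d lam F))
    {y : Fin (d+1) → ℝ} (hy : y ∉ tsupport F) :
    Function.invFun (shear d lam F) y = y := by
  have h1 := shearInvFun_leftInv hbij y
  rwa [shear_eq_id_of_not_mem hy] at h1

lemma shear_mem_tsupport (hbij : Function.Bijective (shear d lam F))
    {x : Fin (d+1) → ℝ} (hx : x ∈ tsupport F) : shear d lam F x ∈ tsupport F := by
  by_contra h
  have h1 : shear d lam F (shear d lam F x) = shear d lam F x := shear_eq_id_of_not_mem h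
  have h2 : shear d lam F x = x := hbij.1 h1
  rw [h2] at h
  exact h hx

lemma shearInvFun_mem_tsupport (hbij : Function.Bijective (shear d lam F))
    {y : Fin (d+1) → ℝ} (hy : y ∈ tsupport F) :
    Function.invFun (shear d lam F) y ∈ tsupport F := by
  by_contra h
  have h1 : shear d lam F (Function.invFun (shear d lam F) y)
      = Function.invFun (shear d lam F) y := shear_eq_id_of_not_mem h
  rw [shearInvFun_rightInv hbij y] at h1
  rw [← h1] at h
  exact h hy

lemma shear_image_eq (hbij : Function.Bijective (shear d lam F))
    {U' : Set (Fin (d+1) → ℝ)} (hsub : tsupport F ⊆ U') :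
    shear d lam F '' U' = U' := by
  apply Set.Subset.antisymm
  · rintro _ ⟨x, hx, rfl⟩
    by_cases h : x ∈ tsupport F
    · exact hsub (shear_mem_tsupport hbij h)
    · rwa [shear_eq_id_of_not_mem h]
  · intro y hy
    by_cases h : y ∈ tsupport F
    · exact ⟨Function.invFun (shear d lam F) y,
        hsub (shearInvFun_mem_tsupport hbij h), shearInvFun_rightInv hbij y⟩
    · exact ⟨y, hy, by rw [shear_eq_id_of_not_mem h]⟩

end bij

variable {d : ℕ}

lemma saCell_mono {E : Type*} {V V' : Set E} {N : ℕ} {h : Fin N → E → ℝ} {σ : Fin N → Sign}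
    (hVV : V ⊆ V') : saCell V h σ ⊆ saCell V' h σ :=
  fun x hx => ⟨hVV hx.1, hx.2⟩

lemma eq_at_closure {X Y : Type*} [TopologicalSpace X] [TopologicalSpace Y] [T2Space Y]
    {f g : X → Y} {s : Set X} {x : X} (heq : Set.EqOn f g s) (hx : x ∈ closure s)
    (hf : ContinuousWithinAt f s x) (hg : ContinuousWithinAt g s x) : f x = g x := by
  haveI hne : (nhdsWithin x s).NeBot := mem_closure_iff_nhdsWithin_neBot.1 hx
  have h1 : Filter.Tendsto f (nhdsWithin x s) (nhds (f x)) := hf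
  have h2 : Filter.Tendsto f (nhdsWithin x s) (nhds (g x)) :=
    hg.congr' (eventually_nhdsWithin_of_forall (fun y hy => (heq hy).symm))
  exact tendsto_nhds_unique h1 h2

/-- projection onto the first `d` coordinates -/
noncomputable def pcast (d : ℕ) : (Fin (d+1) → ℝ) →L[ℝ] (Fin d → ℝ) :=
  ContinuousLinearMap.pi (fun i => ContinuousLinearMap.proj (Fin.castSucc i))

lemma pcast_apply (y : Fin (d+1) → ℝ) : pcast d y = y ∘ Fin.castSucc := rfl

/-- projection onto the last coordinate -/
noncomputable def plast (d : ℕ) : (Fin (d+1) → ℝ) →L[ℝ] ℝ :=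
  ContinuousLinearMap.proj (Fin.last d)

lemma plast_analyticAt (y : Fin (d+1) → ℝ) :
    AnalyticAt ℝ (fun z : Fin (d+1) → ℝ => z (Fin.last d)) y :=
  (plast d).analyticAt y

/-- the product `h'(x¹,…,x^d)·κ'(x^{d+1})` of semianalytic functions is semianalytic -/
lemma prod_semianalytic {h' : (Fin d → ℝ) → ℝ} {κ' : ℝ → ℝ}
    (h1 : SemianalyticOn h' Set.univ) (h2 : SemianalyticOn κ' Set.univ) :
    SemianalyticOn (fun x : Fin (d+1) → ℝ => h' (x ∘ Fin.castSucc) * κ' (x (Fin.last d)))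
      Set.univ := by
  apply semianalyticOn_of_data
  intro x _
  obtain ⟨V₁, hV₁o, hV₁x, -, N₁, H₁, hA₁, key₁⟩ := h1 (x ∘ Fin.castSucc) (Set.mem_univ _)
  obtain ⟨V₂, hV₂o, hV₂x, -, N₂, H₂, hA₂, key₂⟩ := h2 (x (Fin.last d)) (Set.mem_univ _)
  set V : Set (Fin (d+1) → ℝ) :=
    (pcast d) ⁻¹' V₁ ∩ (fun y : Fin (d+1) → ℝ => y (Fin.last d)) ⁻¹' V₂ with hV
  refine ⟨V, ?_, ⟨hV₁x, hV₂x⟩, Set.subset_univ V, Sum (Fin N₁) (Fin N₂), inferInstance,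
    Sum.elim (fun i y => H₁ i (pcast d y)) (fun j y => H₂ j (y (Fin.last d))), ?_, ?_⟩
  · exact (hV₁o.preimage (pcast d).continuous).inter (hV₂o.preimage (plast d).continuous)
  · rintro (i | j) y hy
    · have hy1 : pcast d y ∈ V₁ := hy.1
      exact (hA₁ i _ hy1).comp ((pcast d).analyticAt y)
    · have hy2 : y (Fin.last d) ∈ V₂ := hy.2
      exact AnalyticAt.comp (f := fun z : Fin (d+1) → ℝ => z (Fin.last d)) (x := y)
        (hA₂ j _ hy2) (plast_analyticAt y)
  · intro σ
    obtain ⟨g₁, hg₁A, hg₁E⟩ := key₁ (fun i => σ (Sum.inl i))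
    obtain ⟨g₂, hg₂A, hg₂E⟩ := key₂ (fun j => σ (Sum.inr j))
    refine ⟨fun y => g₁ (pcast d y) * g₂ (y (Fin.last d)), ?_, ?_⟩
    · intro y hy
      have hy1 : pcast d y ∈ V₁ := hy.1
      have hy2 : y (Fin.last d) ∈ V₂ := hy.2
      exact ((hg₁A _ hy1).comp ((pcast d).analyticAt y)).mul
        (AnalyticAt.comp (f := fun z : Fin (d+1) → ℝ => z (Fin.last d)) (x := y)
          (hg₂A _ hy2) (plast_analyticAt y))
    · rintro y ⟨⟨hyV₁, hyV₂⟩, hsig⟩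
      have m₁ : pcast d y ∈ saCell V₁ H₁ (fun i => σ (Sum.inl i)) :=
        ⟨hyV₁, fun i => hsig (Sum.inl i)⟩
      have m₂ : y (Fin.last d) ∈ saCell V₂ H₂ (fun j => σ (Sum.inr j)) :=
        ⟨hyV₂, fun j => hsig (Sum.inr j)⟩
      have e₁ : h' (y ∘ Fin.castSucc) = g₁ (pcast d y) := by
        rw [← pcast_apply]; exact hg₁E m₁
      have e₂ : κ' (y (Fin.last d)) = g₂ (y (Fin.last d)) := hg₂E m₂
      simp only [e₁, e₂]

/-- forward semianalyticity of the shear map -/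
lemma shear_semianalytic {F : (Fin (d+1) → ℝ) → ℝ} (lam : ℝ)
    (hFsa : SemianalyticOn F Set.univ) : SemianalyticOn (shear d lam F) Set.univ := by
  intro x hx
  obtain ⟨V, hVo, hVx, -, N, h, hA, key⟩ := hFsa x hx
  refine ⟨V, hVo, hVx, Set.subset_univ V, N, h, hA, fun σ => ?_⟩
  obtain ⟨g, hgA, hgE⟩ := key σ
  exact ⟨shear d lam g, shear_analyticOnNhd lam hgA,
    fun y hy => by simp only [shear, hgE hy]⟩

/-- compact exhaustion giving a uniform bound on the derivatives of the local analytic pieces -/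
lemma exists_uniform_cover {F : (Fin (d+1) → ℝ) → ℝ}
    (hsa : SemianalyticOn F Set.univ) {K : Set (Fin (d+1) → ℝ)} (hK : IsCompact K) :
    ∃ M : ℝ, 0 ≤ M ∧ ∀ x ∈ K, ∃ V : Set (Fin (d+1) → ℝ), IsOpen V ∧ x ∈ V ∧
      ∃ (N : ℕ) (h : Fin N → (Fin (d+1) → ℝ) → ℝ)
        (g : (Fin N → Sign) → (Fin (d+1) → ℝ) → ℝ),
        (∀ I, AnalyticOnNhd ℝ (h I) V) ∧ (∀ σ, AnalyticOnNhd ℝ (g σ) V) ∧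
        (∀ σ, Set.EqOn F (g σ) (saCell V h σ)) ∧
        (∀ σ, ∀ y ∈ V, ‖fderiv ℝ (g σ) y‖ ≤ M) := by
  have H := fun a : (Fin (d+1) → ℝ) => hsa a (Set.mem_univ a)
  choose V hVo hVx hVU N h hA key using H
  choose g hgA hgE using key
  have hr : ∀ a, ∃ r : ℝ, 0 < r ∧ closedBall a r ⊆ V a := by
    intro a
    obtain ⟨ε, hε, hb⟩ := Metric.isOpen_iff.1 (hVo a) a (hVx a)
    refine ⟨ε/2, by linarith, fun z hz => hb ?_⟩
    rw [mem_closedBall] at hz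
    rw [mem_ball]
    linarith
  choose r hrpos hrV using hr
  have hBa : ∀ a, ∃ B : ℝ, ∀ σ, ∀ y ∈ closedBall a (r a), ‖fderiv ℝ (g a σ) y‖ ≤ B := by
    intro a
    have h1 : ∀ σ : Fin (N a) → Sign, ∃ C, ∀ y ∈ closedBall a (r a),
        ‖fderiv ℝ (g a σ) y‖ ≤ C := by
      intro σ
      apply (isCompact_closedBall a (r a)).exists_bound_of_continuousOn
      exact (((hgA a σ).fderiv_of_isOpen (hVo a)).continuousOn).mono (hrV a)
    choose C hC using h1
    obtain ⟨B, hB⟩ := (Set.finite_range C).bddAbove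
    exact ⟨B, fun σ y hy => (hC σ y hy).trans (hB (Set.mem_range_self σ))⟩
  choose B hB using hBa
  have hcov : K ⊆ ⋃ a ∈ K, ball a (r a) :=
    fun a ha => Set.mem_biUnion ha (mem_ball_self (hrpos a))
  obtain ⟨t, htK, htfin, htcov⟩ := hK.elim_finite_subcover_image
    (fun a _ => isOpen_ball) hcov
  obtain ⟨M₀, hM₀⟩ := (htfin.image B).bddAbove
  refine ⟨max M₀ 0, le_max_right _ _, ?_⟩
  intro x hx
  have hx2 : x ∈ ⋃ a ∈ t, ball a (r a) := htcov hx
  rw [Set.mem_iUnion₂] at hx2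
  obtain ⟨a, hat, hxa⟩ := hx2
  refine ⟨ball a (r a), isOpen_ball, hxa, N a, h a, g a,
    fun I => (hA a I).mono (fun z hz => hrV a (ball_subset_closedBall hz)),
    fun σ => (hgA a σ).mono (fun z hz => hrV a (ball_subset_closedBall hz)),
    fun σ => (hgE a σ).mono (saCell_mono (fun z hz => hrV a (ball_subset_closedBall hz))),
    fun σ y hy => (hB a σ y (ball_subset_closedBall hy)).trans
      ((hM₀ ⟨a, hat, rfl⟩).trans (le_max_left _ _))⟩

/-- `C^m` smoothness of the global inverse -/
lemma shearInvFun_contDiff {F : (Fin (d+1) → ℝ) → ℝ} {lam L : ℝ} {m : ℕ} (hm : 1 ≤ m)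
    (hL : 0 ≤ L) (hlam : 0 ≤ lam) (hsmall : lam * L < 1/2)
    (hbd : ∀ x, ‖fderiv ℝ F x‖ ≤ L) (hFC : ContDiff ℝ m F)
    (hbij : Function.Bijective (shear d lam F)) :
    ContDiff ℝ m (Function.invFun (shear d lam F)) := by
  rw [contDiff_iff_contDiffAt]
  intro y
  set ψ := Function.invFun (shear d lam F) with hψ
  set x := ψ y with hxdef
  have hone : (1 : WithTop ℕ∞) ≤ (m : WithTop ℕ∞) := by exact_mod_cast hm
  have hdiff : DifferentiableAt ℝ F x := (hFC.differentiable (by exact_mod_cast (show m ≠ 0 by omega))).differentiableAt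
  have hder : HasFDerivAt F (fderiv ℝ F x) x := hdiff.hasFDerivAt
  have hne : 1 + lam * (fderiv ℝ F x) (sCLM d 1) ≠ 0 :=
    one_add_ne _ (hbd x) hlam hsmall
  have hdφ : HasFDerivAt (shear d lam F)
      ((shearCLE d lam (fderiv ℝ F x) hne : (Fin (d+1) → ℝ) →L[ℝ] (Fin (d+1) → ℝ))) x := by
    rw [coe_shearCLE]
    exact shear_hasFDerivAt lam hder
  have hcd : ContDiffAt ℝ m (shear d lam F) x := (shear_contDiff lam hFC).contDiffAt
  have hloc := hcd.to_localInverse hdφ (by exact_mod_cast (show m ≠ 0 by omega))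
  have hxy : shear d lam F x = y := shearInvFun_rightInv hbij y
  rw [hxy] at hloc
  apply hloc.congr_of_eventuallyEq
  have hev := (hcd.hasStrictFDerivAt' hdφ (by exact_mod_cast (show m ≠ 0 by omega))).eventually_right_inverse
  rw [hxy] at hev
  filter_upwards [hev] with z hz
  have hz2 : shear d lam F (ψ z) = z := shearInvFun_rightInv hbij z
  exact hbij.1 (hz2.trans hz.symm)


variable {d : ℕ}

lemma shearInvFun_semianalytic {F : (Fin (d+1) → ℝ) → ℝ} {lam L M : ℝ}
    (hlam : 0 < lam) (hL : 0 ≤ L) (hsmallL : lam * L < 1/2) (hsmallM : lam * M < 1/2)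
    (hLip : ∀ x y, dist (F x) (F y) ≤ L * dist x y)
    (hbij : Function.Bijective (shear d lam F))
    (hcover : ∀ x ∈ tsupport F, ∃ V : Set (Fin (d+1) → ℝ), IsOpen V ∧ x ∈ V ∧
      ∃ (N : ℕ) (h : Fin N → (Fin (d+1) → ℝ) → ℝ)
        (g : (Fin N → Sign) → (Fin (d+1) → ℝ) → ℝ),
        (∀ I, AnalyticOnNhd ℝ (h I) V) ∧ (∀ σ, AnalyticOnNhd ℝ (g σ) V) ∧
        (∀ σ, Set.EqOn F (g σ) (saCell V h σ)) ∧
        (∀ σ, ∀ y ∈ V, ‖fderiv ℝ (g σ) y‖ ≤ M)) :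
    SemianalyticOn (Function.invFun (shear d lam F)) Set.univ := by
  have hFcont : Continuous F := by
    apply LipschitzWith.continuous (K := Real.toNNReal L)
    apply LipschitzWith.of_dist_le_mul
    intro x y
    rw [Real.coe_toNNReal _ hL]
    exact hLip x y
  have hφcont : Continuous (shear d lam F) := shear_continuous lam hFcont
  have hψcont : Continuous (Function.invFun (shear d lam F)) :=
    shearInvFun_continuous hL hlam.le hsmallL.le hLip hbij
  set φ := shear d lam F with hφdef
  set ψ := Function.invFun (shear d lam F) with hψdef
  apply semianalyticOn_of_data
  intro yh _
  set xh := ψ yh with hxhdef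
  have hφxh : φ xh = yh := shearInvFun_rightInv hbij yh
  by_cases hxK : xh ∈ tsupport F
  case neg =>
    refine ⟨(tsupport F)ᶜ, (isClosed_tsupport F).isOpen_compl, ?_, Set.subset_univ _,
      Empty, inferInstance, (fun I => I.elim), (fun I => I.elim), ?_⟩
    · rw [← hφxh, hφdef, shear_eq_id_of_not_mem hxK]
      exact hxK
    · intro σ
      refine ⟨id, fun z _ => analyticAt_id, ?_⟩
      intro z hz
      exact shearInvFun_eq_id_of_not_mem hbij hz.1
  case pos =>
  obtain ⟨V₀, hV₀o, hV₀x, N, h, g, hhA, hgA, hgE, hgD⟩ := hcover xh hxK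
  set Φ : (Fin N → Sign) → (Fin (d+1) → ℝ) → (Fin (d+1) → ℝ) :=
    fun σ => shear d lam (g σ) with hΦdef
  have hΦA : ∀ σ, AnalyticOnNhd ℝ (Φ σ) V₀ := fun σ => shear_analyticOnNhd lam (hgA σ)
  have hΦE : ∀ σ, Set.EqOn φ (Φ σ) (saCell V₀ h σ) := by
    intro σ z hz
    simp only [hφdef, shear, hΦdef, hgE σ hz]
  -- pruning of cells not accumulating at xh
  have hprune : ∀ σ : Fin N → Sign, ∃ ρ : ℝ, 0 < ρ ∧
      (xh ∉ closure (saCell V₀ h σ) → ball xh ρ ∩ saCell V₀ h σ = ∅) := by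
    intro σ
    by_cases hk : xh ∈ closure (saCell V₀ h σ)
    · exact ⟨1, one_pos, fun hc => absurd hk hc⟩
    · rw [Metric.mem_closure_iff] at hk
      push_neg at hk
      obtain ⟨ε, hε, hdisj⟩ := hk
      refine ⟨ε, hε, fun _ => ?_⟩
      rw [Set.eq_empty_iff_forall_notMem]
      rintro z ⟨hz1, hz2⟩
      have h1 : dist xh z < ε := by rw [dist_comm]; exact mem_ball.1 hz1
      exact absurd h1 (not_lt.2 (hdisj z hz2))
  choose ρ hρpos hρdisj using hprune
  obtain ⟨ρ₀, hρ₀pos, hρ₀le⟩ : ∃ ρ₀ : ℝ, 0 < ρ₀ ∧ ∀ σ, ρ₀ ≤ ρ σ := by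
    have hne : (Finset.univ.image ρ).Nonempty := ⟨ρ (fun _ => Sign.pos),
      Finset.mem_image_of_mem ρ (Finset.mem_univ _)⟩
    refine ⟨(Finset.univ.image ρ).min' hne, ?_, ?_⟩
    · obtain ⟨σ₀, -, hσ₀⟩ := Finset.mem_image.1 ((Finset.univ.image ρ).min'_mem hne)
      rw [← hσ₀]
      exact hρpos σ₀
    · intro σ
      exact Finset.min'_le _ _ (Finset.mem_image_of_mem ρ (Finset.mem_univ σ))
  set V := V₀ ∩ ball xh ρ₀ with hVdef
  have hVo : IsOpen V := hV₀o.inter isOpen_ball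
  have hVx : xh ∈ V := ⟨hV₀x, mem_ball_self hρ₀pos⟩
  have hVsub : V ⊆ V₀ := Set.inter_subset_left
  have hkeep_of_mem : ∀ (σ : Fin N → Sign) z, z ∈ saCell V h σ →
      xh ∈ closure (saCell V₀ h σ) := by
    intro σ z hz
    by_contra hk
    have hz1 : z ∈ ball xh (ρ σ) := by
      have := hz.1.2
      rw [mem_ball] at this ⊢
      exact lt_of_lt_of_le this (hρ₀le σ)
    have hz2 : z ∈ saCell V₀ h σ := ⟨hz.1.1, hz.2⟩
    have := hρdisj σ hk
    rw [Set.eq_empty_iff_forall_notMem] at this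
    exact this z ⟨hz1, hz2⟩
  -- local analytic inverses for the kept pieces
  have inv_data : ∀ σ : Fin N → Sign,
      ∃ (G : (Fin (d+1) → ℝ) → (Fin (d+1) → ℝ)) (W S : Set (Fin (d+1) → ℝ)),
      IsOpen W ∧ yh ∈ W ∧ IsOpen S ∧ xh ∈ S ∧ AnalyticOnNhd ℝ G W ∧
      (∀ y ∈ W, G y ∈ V₀) ∧
      (xh ∈ closure (saCell V₀ h σ) →
        (∀ y ∈ W, Φ σ (G y) = y) ∧ (∀ y ∈ W, G y ∈ V) ∧ (∀ z ∈ S, G (Φ σ z) = z)) := by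
    intro σ
    by_cases hk : xh ∈ closure (saCell V₀ h σ)
    case neg =>
      exact ⟨fun _ => xh, Set.univ, Set.univ, isOpen_univ, Set.mem_univ _, isOpen_univ,
        Set.mem_univ _, fun z _ => analyticAt_const, fun y _ => hV₀x,
        fun hc => absurd hc hk⟩
    case pos =>
      have hφcwa : ContinuousWithinAt φ (saCell V₀ h σ) xh := hφcont.continuousWithinAt
      have hΦcwa : ContinuousWithinAt (Φ σ) (saCell V₀ h σ) xh :=
        ((hΦA σ) xh hV₀x).continuousAt.continuousWithinAt
      have hΦyh : Φ σ xh = yh := by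
        rw [← hφxh]
        exact (eq_at_closure (hΦE σ) hk hφcwa hΦcwa).symm
      have hgdiff : DifferentiableAt ℝ (g σ) xh := ((hgA σ) xh hV₀x).differentiableAt
      have hne : 1 + lam * (fderiv ℝ (g σ) xh) (sCLM d 1) ≠ 0 :=
        one_add_ne _ (hgD σ xh hV₀x) hlam.le hsmallM
      have hdΦ : HasFDerivAt (Φ σ)
          ((shearCLE d lam (fderiv ℝ (g σ) xh) hne :
            (Fin (d+1) → ℝ) →L[ℝ] (Fin (d+1) → ℝ))) xh := by
        rw [coe_shearCLE]
        exact shear_hasFDerivAt lam hgdiff.hasFDerivAt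
      have hcd1 : ContDiffAt ℝ 1 (Φ σ) xh := ((hΦA σ) xh hV₀x).contDiffAt
      have hstrict : HasStrictFDerivAt (Φ σ)
          ((shearCLE d lam (fderiv ℝ (g σ) xh) hne :
            (Fin (d+1) → ℝ) →L[ℝ] (Fin (d+1) → ℝ))) xh :=
        hcd1.hasStrictFDerivAt' hdΦ one_ne_zero
      set ph := HasStrictFDerivAt.toOpenPartialHomeomorph _ hstrict with hphdef
      have hcoe : ⇑ph = Φ σ := hstrict.toOpenPartialHomeomorph_coe
      have hsrc : xh ∈ ph.source := hstrict.mem_toOpenPartialHomeomorph_source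
      have htgt : yh ∈ ph.target := by
        rw [← hΦyh, ← hcoe]
        exact ph.map_source hsrc
      have hsymmxh : ph.symm yh = xh := by
        rw [← hΦyh, ← hcoe]
        exact ph.left_inv hsrc
      have hsymmA : AnalyticAt ℝ (ph.symm) yh := by
        apply ph.analyticAt_symm htgt
        · rw [hsymmxh, hcoe]
          exact (hΦA σ) xh hV₀x
        · rw [hsymmxh, hcoe]
          exact hdΦ.fderiv
      obtain ⟨O, hOnhds, hOana⟩ := hsymmA.exists_mem_nhds_analyticOnNhd
      have hGcont : ContinuousAt (ph.symm) yh := hsymmA.continuousAt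
      have hpre : (⇑ph.symm) ⁻¹' V ∈ nhds yh := by
        apply hGcont.preimage_mem_nhds
        rw [hsymmxh]
        exact hVo.mem_nhds hVx
      refine ⟨⇑ph.symm, interior O ∩ interior ((⇑ph.symm) ⁻¹' V) ∩ ph.target, ph.source,
        ?_, ?_, ph.open_source, hsrc, ?_, ?_, fun _ => ⟨?_, ?_, ?_⟩⟩
      · exact (isOpen_interior.inter isOpen_interior).inter ph.open_target
      · exact ⟨⟨mem_interior_iff_mem_nhds.2 hOnhds, mem_interior_iff_mem_nhds.2 hpre⟩, htgt⟩
      · intro y hy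
        exact hOana y (interior_subset hy.1.1)
      · intro y hy
        have h2 : y ∈ (⇑ph.symm) ⁻¹' V := interior_subset hy.1.2
        exact hVsub h2
      · intro y hy
        rw [← hcoe]
        exact ph.right_inv hy.2
      · intro y hy
        have h2 : y ∈ (⇑ph.symm) ⁻¹' V := interior_subset hy.1.2
        exact h2
      · intro z hz
        rw [← hcoe]
        exact ph.left_inv hz
  choose G W S hWo hWyh hSo hSxh hGA hGV₀ hkeeped using inv_data
  have hO₁ : IsOpen (V ∩ ⋂ σ, S σ) := hVo.inter (isOpen_iInter_of_finite hSo)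
  have hO₁x : xh ∈ V ∩ ⋂ σ, S σ := ⟨hVx, Set.mem_iInter.2 hSxh⟩
  obtain ⟨ε, hεpos, hεsub⟩ := Metric.isOpen_iff.1 hO₁ xh hO₁x
  have hO₂ : IsOpen (⋂ σ, W σ) := isOpen_iInter_of_finite hWo
  obtain ⟨δ, hδpos, hδsub⟩ := Metric.isOpen_iff.1 hO₂ yh (Set.mem_iInter.2 hWyh)
  have hρ'pos : 0 < min δ (ε/2) := lt_min hδpos (by linarith)
  set Vy := ball yh (min δ (ε/2)) with hVydef
  have hψmaps : ∀ y' ∈ Vy, ψ y' ∈ V ∩ ⋂ σ, S σ := by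
    intro y' hy'
    apply hεsub
    rw [mem_ball]
    have h1 : dist y' yh < min δ (ε/2) := mem_ball.1 hy'
    calc dist (ψ y') xh = dist (ψ y') (ψ yh) := rfl
    _ ≤ 2 * dist y' yh := shearInvFun_dist hL hlam.le hsmallL.le hLip hbij y' yh
    _ < ε := by
        have h2 : min δ (ε/2) ≤ ε/2 := min_le_right _ _
        have h3 : 0 ≤ dist y' yh := dist_nonneg
        linarith
  have hVyW : ∀ σ, Vy ⊆ W σ := by
    intro σ z hz
    have h1 : z ∈ ball yh δ := ball_subset_ball (min_le_left _ _) hz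
    exact Set.mem_iInter.1 (hδsub h1) σ
  refine ⟨Vy, isOpen_ball, mem_ball_self hρ'pos, Set.subset_univ _,
    (Fin N) × (Fin N → Sign), inferInstance, (fun p y => h p.1 (G p.2 y)), ?_, ?_⟩
  · intro p y hy
    exact (hhA p.1 _ (hGV₀ p.2 y (hVyW p.2 hy))).comp ((hGA p.2) y (hVyW p.2 hy))
  · intro τ
    by_cases hex : ∃ σ, xh ∈ closure (saCell V₀ h σ) ∧ ∀ i, τ (i, σ) = σ i
    · obtain ⟨σs, hσskeep, hσsdiag⟩ := hex
      obtain ⟨hrinv, hGV, hlinv⟩ := hkeeped σs hσskeep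
      refine ⟨G σs, fun y hy => (hGA σs) y (hVyW σs hy), ?_⟩
      rintro y' ⟨hy'Vy, hsig⟩
      have hGin : G σs y' ∈ saCell V h σs := by
        refine ⟨hGV y' (hVyW _ hy'Vy), fun i => ?_⟩
        have h1 : (τ (i, σs)).holds (h i (G σs y')) := hsig (i, σs)
        rw [hσsdiag i] at h1
        exact h1
      have hφG : φ (G σs y') = y' := by
        rw [hΦE σs (saCell_mono hVsub hGin)]
        exact hrinv y' (hVyW _ hy'Vy)
      have : ψ (φ (G σs y')) = G σs y' := shearInvFun_leftInv hbij _
      rw [hφG] at this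
      exact this.symm ▸ this
    · refine ⟨fun _ => xh, fun y _ => analyticAt_const, ?_⟩
      rintro y' ⟨hy'Vy, hsig⟩
      exfalso
      set x' := ψ y' with hx'def
      have hx'mem : x' ∈ V ∩ ⋂ σ, S σ := hψmaps y' hy'Vy
      set σ' : Fin N → Sign := fun i => sgn (h i x') with hσ'def
      have hx'cell : x' ∈ saCell V h σ' := ⟨hx'mem.1, fun i => sgn_holds _⟩
      have hkσ' : xh ∈ closure (saCell V₀ h σ') := hkeep_of_mem σ' x' hx'cell
      obtain ⟨hrinv, hGV, hlinv⟩ := hkeeped σ' hkσ'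
      have hΦx' : Φ σ' x' = y' := by
        rw [← hΦE σ' (saCell_mono hVsub hx'cell)]
        exact shearInvFun_rightInv hbij y'
      have hGy' : G σ' y' = x' := by
        rw [← hΦx']
        exact hlinv x' (Set.mem_iInter.1 hx'mem.2 σ')
      apply hex
      refine ⟨σ', hkσ', fun i => ?_⟩
      have h1 : (τ (i, σ')).holds (h i (G σ' y')) := hsig (i, σ')
      rw [hGy'] at h1
      exact holds_unique h1 (sgn_holds _)


end uniqLQG

/-- **Lemma 4.2.** Let `D = d + 1 ≥ 1`, let `U' ⊆ ℝ^D` be open and `m ≥ 1`.  Let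
`h' : ℝ^{D−1} → ℝ` and `κ' : ℝ → ℝ` be semianalytic functions of class `C^m` with
`κ' 0 = 1` such that `x ↦ h'(x¹,…,x^{D−1})·κ'(x^D)` has compact support contained in `U'`.
Then there is `λ₀ > 0` such that for all `0 < λ < λ₀` the map `φ'_λ` is a `C^m`
diffeomorphism of `ℝ^D`, semianalytic together with its inverse, equal to the identity
outside `U'`, and mapping `U'` onto `U'`. -/
theorem uniqLQG.shear_diffeomorphism (d m : ℕ) (hm : 1 ≤ m)
    (U' : Set (Fin (d + 1) → ℝ)) (hU' : IsOpen U')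
    (h' : (Fin d → ℝ) → ℝ) (κ' : ℝ → ℝ)
    (hh'sa : SemianalyticOn h' Set.univ) (hh'C : ContDiff ℝ m h')
    (hκ'sa : SemianalyticOn κ' Set.univ) (hκ'C : ContDiff ℝ m κ')
    (hκ'0 : κ' 0 = 1)
    (hsupp : HasCompactSupport
      (fun x : Fin (d + 1) → ℝ => h' (x ∘ Fin.castSucc) * κ' (x (Fin.last d))))
    (hsuppU : tsupport
      (fun x : Fin (d + 1) → ℝ => h' (x ∘ Fin.castSucc) * κ' (x (Fin.last d))) ⊆ U') :
    ∃ lam₀ : ℝ, 0 < lam₀ ∧ ∀ lam : ℝ, 0 < lam → lam < lam₀ →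
      Function.Bijective (phiLam d h' κ' lam) ∧
      ContDiff ℝ m (phiLam d h' κ' lam) ∧
      ContDiff ℝ m (Function.invFun (phiLam d h' κ' lam)) ∧
      SemianalyticOn (phiLam d h' κ' lam) Set.univ ∧
      SemianalyticOn (Function.invFun (phiLam d h' κ' lam)) Set.univ ∧
      (∀ x ∉ U', phiLam d h' κ' lam x = x) ∧
      phiLam d h' κ' lam '' U' = U' := by
  classical
  have hFsa : SemianalyticOn
      (fun x : Fin (d + 1) → ℝ => h' (x ∘ Fin.castSucc) * κ' (x (Fin.last d))) Set.univ :=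
    uniqLQG.prod_semianalytic hh'sa hκ'sa
  have hFC : ContDiff ℝ m
      (fun x : Fin (d + 1) → ℝ => h' (x ∘ Fin.castSucc) * κ' (x (Fin.last d))) := by
    have h1 : ContDiff ℝ m (fun x : Fin (d+1) → ℝ => h' (x ∘ Fin.castSucc)) :=
      hh'C.comp (uniqLQG.pcast d).contDiff
    have h2 : ContDiff ℝ m (fun x : Fin (d+1) → ℝ => κ' (x (Fin.last d))) :=
      hκ'C.comp (uniqLQG.plast d).contDiff
    exact h1.mul h2
  have hone : (1 : WithTop ℕ∞) ≤ (m : WithTop ℕ∞) := by exact_mod_cast hm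
  obtain ⟨x₀, hx₀⟩ := Continuous.exists_forall_ge_of_hasCompactSupport
    ((hFC.continuous_fderiv (by exact_mod_cast (show m ≠ 0 by omega))).norm) ((hsupp.fderiv ℝ).norm)
  set F := fun x : Fin (d + 1) → ℝ => h' (x ∘ Fin.castSucc) * κ' (x (Fin.last d)) with hFdef
  set L := max ‖fderiv ℝ F x₀‖ 0 with hLdef
  have hL : 0 ≤ L := le_max_right _ _
  have hbd : ∀ x, ‖fderiv ℝ F x‖ ≤ L := fun x => le_trans (hx₀ x) (le_max_left _ _)
  have hLip : ∀ x y, dist (F x) (F y) ≤ L * dist x y := by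
    intro x y
    rw [dist_eq_norm, dist_eq_norm]
    exact Convex.norm_image_sub_le_of_norm_fderiv_le
      (fun z _ => ((hFC.differentiable (by exact_mod_cast (show m ≠ 0 by omega))) z))
      (fun z _ => hbd z) convex_univ (Set.mem_univ y) (Set.mem_univ x)
  obtain ⟨M, hM, hcover⟩ := uniqLQG.exists_uniform_cover hFsa hsupp
  have hc : (0:ℝ) < 2*(L+M)+2 := by positivity
  refine ⟨(2*(L+M)+2)⁻¹, by positivity, ?_⟩
  intro lam hlam hlt
  have h1 : lam * (2*(L+M)+2) < 1 := by
    calc lam * (2*(L+M)+2) < (2*(L+M)+2)⁻¹ * (2*(L+M)+2) :=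
          mul_lt_mul_of_pos_right hlt hc
    _ = 1 := inv_mul_cancel₀ (ne_of_gt hc)
  have hsmallL : lam * L < 1/2 := by nlinarith
  have hsmallM : lam * M < 1/2 := by nlinarith
  rw [uniqLQG.phiLam_eq_shear d h' κ' lam]
  have hbij : Function.Bijective (uniqLQG.shear d lam F) :=
    uniqLQG.shear_bijective hL hlam.le (by linarith) hLip
  refine ⟨hbij, uniqLQG.shear_contDiff lam hFC,
    uniqLQG.shearInvFun_contDiff hm hL hlam.le hsmallL hbd hFC hbij,
    uniqLQG.shear_semianalytic lam hFsa,
    uniqLQG.shearInvFun_semianalytic hlam hL hsmallL hsmallM hLip hbij hcover,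
    fun x hx => uniqLQG.shear_eq_id_of_not_mem (fun hmem => hx (hsuppU hmem)),
    uniqLQG.shear_image_eq hbij hsuppU⟩
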